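/- In the synchronous multi-agent all-floating model on a finite connected simple graph G, suppose r_i' > 0 and r_i + r_i' ≤ 1 for every agent i, and suppose that G contains a cycle of odd length (i.e., G is not bipartite) or there exists an agent i with r_i + r_i' < 1. Then for every ordered pair (i,j) with {i,j} an edge of G, the sequence x_{i,j}(t) converges as t → ∞, all these limits are equal, and the common limit is L = (Σ_{i∈N} (d(i)/(r_i + r_i'))·k_i) / (Σ_{i∈N} d(i)/(r_i + r_i')), a convex combination of the kindness values. -/

import Mathlib

namespace AFaux

/-- n-step reachability along a step relation. -/
inductive ReachN {α : Type*} (Step : α → α → Prop) : ℕ → α → α → Prop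
  | zero (a : α) : ReachN Step 0 a a
  | succ {n : ℕ} {a b c : α} : Step a b → ReachN Step n b c → ReachN Step (n+1) a c

theorem ReachN.trans {α : Type*} {Step : α → α → Prop} {m n : ℕ} {a b c : α}
    (h1 : ReachN Step m a b) (h2 : ReachN Step n b c) : ReachN Step (m + n) a c := by
  induction h1 with
  | zero a => simpa using h2
  | succ hs _ ih => rw [Nat.add_right_comm]; exact .succ hs (ih h2)

theorem sup'_neg' {α : Type*} [Fintype α] [Nonempty α] (f : α → ℝ) :
    Finset.univ.sup' Finset.univ_nonempty (fun a => -f a)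
      = - Finset.univ.inf' Finset.univ_nonempty f := by
  apply le_antisymm
  · exact Finset.sup'_le _ _ fun a _ => neg_le_neg (Finset.inf'_le _ (Finset.mem_univ a))
  · rw [neg_le]
    exact Finset.le_inf' _ _ fun a _ => by
      have := Finset.le_sup' (fun a => -f a) (Finset.mem_univ a)
      linarith

section Core

variable {α : Type*} [Fintype α] [Nonempty α]

noncomputable def Msup (y : ℕ → α → ℝ) (t : ℕ) : ℝ :=
  Finset.univ.sup' Finset.univ_nonempty (y t)

noncomputable def minf (y : ℕ → α → ℝ) (t : ℕ) : ℝ :=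
  Finset.univ.inf' Finset.univ_nonempty (y t)

theorem le_Msup (y : ℕ → α → ℝ) (t : ℕ) (a : α) : y t a ≤ Msup y t :=
  Finset.le_sup' (y t) (Finset.mem_univ a)

theorem minf_le (y : ℕ → α → ℝ) (t : ℕ) (a : α) : minf y t ≤ y t a :=
  Finset.inf'_le (y t) (Finset.mem_univ a)

theorem minf_le_Msup (y : ℕ → α → ℝ) (t : ℕ) : minf y t ≤ Msup y t :=
  le_trans (minf_le y t (Classical.arbitrary α)) (le_Msup y t _)

variable {y : ℕ → α → ℝ} {ε : ℝ} {Step : α → α → Prop}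

theorem Msup_antitone (hε : 0 < ε) (hε1 : ε ≤ 1)
    (hstepex : ∀ a, ∃ b, Step a b)
    (hup : ∀ t a b, Step a b → y (t+1) a ≤ (1-ε) * Msup y t + ε * y t b)
    (t : ℕ) : Msup y (t+1) ≤ Msup y t := by
  apply Finset.sup'_le
  intro a _
  obtain ⟨b, hb⟩ := hstepex a
  calc y (t+1) a ≤ (1-ε) * Msup y t + ε * y t b := hup t a b hb
    _ ≤ (1-ε) * Msup y t + ε * Msup y t := by
        have := le_Msup y t b; nlinarith
    _ = Msup y t := by ring

theorem Msup_anti_le (hε : 0 < ε) (hε1 : ε ≤ 1)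
    (hstepex : ∀ a, ∃ b, Step a b)
    (hup : ∀ t a b, Step a b → y (t+1) a ≤ (1-ε) * Msup y t + ε * y t b)
    (s t : ℕ) (h : s ≤ t) : Msup y t ≤ Msup y s := by
  induction t with
  | zero => simp_all
  | succ n ih =>
    rcases Nat.lt_or_ge s (n+1) with h' | h'
    · exact le_trans (Msup_antitone hε hε1 hstepex hup n) (ih (Nat.lt_succ_iff.mp h'))
    · have : s = n + 1 := le_antisymm h h'
      subst this; exact le_rfl

/-- chain bound along reachability -/
theorem chain_bound (hε : 0 < ε) (hε1 : ε ≤ 1)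
    (hstepex : ∀ a, ∃ b, Step a b)
    (hup : ∀ t a b, Step a b → y (t+1) a ≤ (1-ε) * Msup y t + ε * y t b) :
    ∀ (n t : ℕ) (a b : α), ReachN Step n a b →
      y (t+n) a ≤ (1 - ε^n) * Msup y t + ε^n * y t b := by
  intro n
  induction n with
  | zero => intro t a b h; cases h; simp
  | succ n ih =>
    intro t a c h
    cases h with
    | succ hab hbc =>
      rename_i b
      have h1 : y (t + (n+1)) a ≤ (1-ε) * Msup y (t+n) + ε * y (t+n) b := by
        have heq : t + (n+1) = (t+n) + 1 := by omega
        rw [heq]; exact hup (t+n) a b hab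
      have h2 : y (t+n) b ≤ (1 - ε^n) * Msup y t + ε^n * y t c := ih t b c hbc
      have h3 : Msup y (t+n) ≤ Msup y t :=
        Msup_anti_le hε hε1 hstepex hup t (t+n) (Nat.le_add_right _ _)
      have h4 : y t c ≤ Msup y t := le_Msup y t c
      have h5 : ε^n ≤ 1 := pow_le_one₀ (le_of_lt hε) hε1
      have h6 : 0 < ε^n := pow_pos hε n
      calc y (t + (n+1)) a ≤ (1-ε) * Msup y (t+n) + ε * y (t+n) b := h1
        _ ≤ (1-ε) * Msup y t + ε * ((1 - ε^n) * Msup y t + ε^n * y t c) := by nlinarith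
        _ = (1 - ε^(n+1)) * Msup y t + ε^(n+1) * (y t c) := by ring
end Core

end AFaux

namespace AFaux

section Conv
variable {α : Type*} [Fintype α] [Nonempty α]

theorem tendsto_of_reach (y : ℕ → α → ℝ) (ε : ℝ) (N : ℕ) (Step : α → α → Prop)
    (hε : 0 < ε) (hε1 : ε ≤ 1) (hN1 : 1 ≤ N)
    (hstepex : ∀ a, ∃ b, Step a b)
    (hreach : ∀ a b, ReachN Step N a b)
    (hup : ∀ t a b, Step a b → y (t+1) a ≤ (1-ε) * Msup y t + ε * y t b)
    (hlo : ∀ t a b, Step a b → (1-ε) * minf y t + ε * y t b ≤ y (t+1) a) :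
    ∃ L, ∀ a, Filter.Tendsto (fun t => y t a) Filter.atTop (nhds L) := by
  classical
  set y' : ℕ → α → ℝ := fun t a => -(y t a) with hy'
  have hMsy' : ∀ t, Msup y' t = - minf y t := fun t => sup'_neg' (y t)
  have hup' : ∀ t a b, Step a b → y' (t+1) a ≤ (1-ε) * Msup y' t + ε * y' t b := by
    intro t a b hab
    have := hlo t a b hab
    rw [hMsy']; simp only [hy']
    nlinarith
  have hcu := chain_bound hε hε1 hstepex hup
  have hcl := chain_bound hε hε1 hstepex hup'
  set δ : ℝ := ε ^ N with hδ
  have hδ0 : 0 < δ := pow_pos hε N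
  have hδ1 : δ ≤ 1 := pow_le_one₀ (le_of_lt hε) hε1
  -- contraction of the oscillation
  have hMstep : ∀ t, Msup y (t+N) ≤ (1-δ) * Msup y t + δ * minf y t := by
    intro t
    obtain ⟨b, _, hb⟩ := Finset.exists_mem_eq_inf' (Finset.univ_nonempty) (y t)
    apply Finset.sup'_le
    intro a _
    have := hcu N t a b (hreach a b)
    rw [← hb] at this
    exact this
  have hmstep : ∀ t, (1-δ) * minf y t + δ * Msup y t ≤ minf y (t+N) := by
    intro t
    obtain ⟨b, _, hb⟩ := Finset.exists_mem_eq_sup' (Finset.univ_nonempty) (y t)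
    have hMb : Msup y t = y t b := hb
    apply Finset.le_inf'
    intro a _
    have h := hcl N t a b (hreach a b)
    rw [hMsy'] at h
    simp only [hy'] at h
    rw [hMb]
    nlinarith [h]
  -- monotonicity
  have hManti : Antitone (Msup y) := by
    apply antitone_nat_of_succ_le
    intro t; exact Msup_antitone hε hε1 hstepex hup t
  have hmmono : Monotone (minf y) := by
    apply monotone_nat_of_le_succ
    intro t
    have := Msup_antitone hε hε1 hstepex hup' (y := y') t
    simp only [hMsy'] at this
    linarith
  have hmleM : ∀ t, minf y t ≤ Msup y t := minf_le_Msup y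
  -- oscillation
  set osc : ℕ → ℝ := fun t => Msup y t - minf y t with hosc
  have hosc0 : ∀ t, 0 ≤ osc t := fun t => sub_nonneg.mpr (hmleM t)
  set q : ℝ := max (1 - 2*δ) 0 with hq
  have hq0 : 0 ≤ q := le_max_right _ _
  have hq1 : q < 1 := by
    apply max_lt <;> linarith
  have hcontr : ∀ t, osc (t+N) ≤ q * osc t := by
    intro t
    have h1 := hMstep t
    have h2 := hmstep t
    have h3 : osc (t+N) ≤ (1-2*δ) * osc t := by simp only [hosc]; nlinarith
    calc osc (t+N) ≤ (1-2*δ) * osc t := h3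
      _ ≤ q * osc t := mul_le_mul_of_nonneg_right (le_max_left _ _) (hosc0 t)
  have hgeo : ∀ j : ℕ, osc (N * j) ≤ q ^ j * osc 0 := by
    intro j
    induction j with
    | zero => simp
    | succ n ih =>
      have : N * (n+1) = N * n + N := by ring
      rw [this]
      calc osc (N*n + N) ≤ q * osc (N*n) := hcontr (N*n)
        _ ≤ q * (q^n * osc 0) := mul_le_mul_of_nonneg_left ih hq0
        _ = q^(n+1) * osc 0 := by ring
  -- limits of M and m
  have hbddM : BddBelow (Set.range (Msup y)) := by
    refine ⟨minf y 0, ?_⟩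
    rintro _ ⟨t, rfl⟩
    exact le_trans (hmmono (Nat.zero_le t)) (hmleM t)
  have hbddm : BddAbove (Set.range (minf y)) := by
    refine ⟨Msup y 0, ?_⟩
    rintro _ ⟨t, rfl⟩
    exact le_trans (hmleM t) (hManti (Nat.zero_le t))
  have hMt := tendsto_atTop_ciInf hManti hbddM
  have hmt := tendsto_atTop_ciSup hmmono hbddm
  set LM := ⨅ t, Msup y t
  set Lm := ⨆ t, minf y t
  -- osc along subsequence tends to 0 and to LM - Lm
  have hNsub : Filter.Tendsto (fun j : ℕ => N * j) Filter.atTop Filter.atTop := by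
    apply Filter.tendsto_atTop_atTop.mpr
    intro b
    exact ⟨b, fun a ha => le_trans ha (Nat.le_mul_of_pos_left a hN1)⟩
  have hosc_sub0 : Filter.Tendsto (fun j => osc (N * j)) Filter.atTop (nhds 0) := by
    have hq' : Filter.Tendsto (fun j : ℕ => q ^ j * osc 0) Filter.atTop (nhds 0) := by
      have := tendsto_pow_atTop_nhds_zero_of_lt_one hq0 hq1
      simpa using this.mul_const (osc 0)
    exact squeeze_zero (fun j => hosc0 _) hgeo hq'
  have hosc_lim : Filter.Tendsto osc Filter.atTop (nhds (LM - Lm)) := hMt.sub hmt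
  have hosc_sub : Filter.Tendsto (fun j => osc (N * j)) Filter.atTop (nhds (LM - Lm)) :=
    hosc_lim.comp hNsub
  have hLMm : LM - Lm = 0 := tendsto_nhds_unique hosc_sub hosc_sub0
  have hLeq : Lm = LM := by linarith
  refine ⟨LM, fun a => ?_⟩
  apply tendsto_of_tendsto_of_tendsto_of_le_of_le (hLeq ▸ hmt) hMt
  · intro t; exact minf_le y t a
  · intro t; exact le_Msup y t a

end Conv
end AFaux
namespace AFaux
variable {V : Type*} [Fintype V] [DecidableEq V] {G : SimpleGraph V} [DecidableRel G.Adj]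

/-- step relation on ordered edges -/
def AFStep (G : SimpleGraph V) (lazy : V → Prop) (e f : {p : V × V // G.Adj p.1 p.2}) : Prop :=
  f.val.2 = e.val.1 ∨ (lazy e.val.1 ∧ f = e)

theorem afstep_ex (lazy : V → Prop) (e : {p : V × V // G.Adj p.1 p.2}) :
    ∃ f, AFStep G lazy e f :=
  ⟨⟨(e.val.2, e.val.1), e.prop.symm⟩, Or.inl rfl⟩

theorem walk_reach (lazy : V → Prop) {i b : V} (p : G.Walk i b) :
    ∀ (e f : {p : V × V // G.Adj p.1 p.2}), e.val.1 = i → f.val.2 = b →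
      ReachN (AFStep G lazy) (p.length + 1) e f := by
  induction p with
  | nil =>
    intro e f he hf
    exact .succ (Or.inl (hf.trans he.symm)) (.zero f)
  | @cons i c b h q ih =>
    intro e f he hf
    have hg : G.Adj c i := h.symm
    have step1 : AFStep G lazy e ⟨(c, i), hg⟩ := Or.inl he.symm
    have := ih ⟨(c, i), hg⟩ f rfl hf
    exact .succ step1 this

theorem stall (lazy : V → Prop) (e : {p : V × V // G.Adj p.1 p.2})
    (h : lazy e.val.1) : ∀ n, ReachN (AFStep G lazy) n e e := by
  intro n
  induction n with
  | zero => exact .zero e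
  | succ n ih => exact .succ (Or.inr ⟨h, rfl⟩) ih

theorem pad_walk {i b c : V} (h : G.Adj b c) (p : G.Walk i b) (k : ℕ) :
    ∃ q : G.Walk i b, q.length = p.length + 2 * k := by
  induction k with
  | zero => exact ⟨p, by simp⟩
  | succ n ih =>
    obtain ⟨q, hq⟩ := ih
    refine ⟨q.append (.cons h (.cons h.symm .nil)), ?_⟩
    simp [SimpleGraph.Walk.length_append, hq]; omega

theorem exists_neighbor (hconn : G.Connected) (hcard : 2 ≤ Fintype.card V) (v : V) :
    ∃ w, G.Adj v w := by
  obtain ⟨u, hu⟩ := Fintype.exists_ne_of_one_lt_card (by omega) v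
  obtain ⟨p⟩ := hconn.preconnected v u
  cases p with
  | nil => exact absurd rfl hu.symm
  | cons h _ => exact ⟨_, h⟩

/-- exact-length walks in the non-bipartite case -/
theorem exists_walk_of_length (hconn : G.Connected) (hcard : 2 ≤ Fintype.card V)
    {u : V} (w : G.Walk u u) (hodd : Odd w.length) (i b : V) :
    ∃ p : G.Walk i b, p.length = 2 * Fintype.card V + w.length := by
  classical
  set T := 2 * Fintype.card V + w.length with hT
  obtain ⟨p1⟩ := hconn.preconnected i u
  obtain ⟨p2⟩ := hconn.preconnected u b
  set q1 := (p1.toPath : G.Walk i u) with hq1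
  set q2 := (p2.toPath : G.Walk u b) with hq2
  have h1 : q1.length < Fintype.card V := p1.toPath.prop.length_lt
  have h2 : q2.length < Fintype.card V := p2.toPath.prop.length_lt
  obtain ⟨cnb, hcnb⟩ := exists_neighbor hconn hcard b
  set A := q1.length + q2.length with hA
  obtain ⟨d, hd⟩ := hodd
  rcases Nat.even_or_odd (T - A) with he | ho
  · obtain ⟨c, hc⟩ := he
    obtain ⟨p, hp⟩ := pad_walk hcnb (q1.append q2) c
    refine ⟨p, ?_⟩
    rw [hp, SimpleGraph.Walk.length_append]
    omega
  · obtain ⟨c, hc⟩ := ho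
    obtain ⟨p, hp⟩ := pad_walk hcnb (q1.append (w.append q2)) (c - d)
    refine ⟨p, ?_⟩
    rw [hp]
    simp only [SimpleGraph.Walk.length_append]
    omega

theorem reach_exists (hconn : G.Connected) (hcard : 2 ≤ Fintype.card V) (lazy : V → Prop)
    (hodd_or : (∃ (u : V) (w : G.Walk u u), Odd w.length) ∨ ∃ v, lazy v) :
    ∃ N, 1 ≤ N ∧ ∀ e f : {p : V × V // G.Adj p.1 p.2}, ReachN (AFStep G lazy) N e f := by
  classical
  rcases hodd_or with ⟨u, w, hodd⟩ | ⟨v0, hv0⟩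
  · refine ⟨2 * Fintype.card V + w.length + 1, by omega, fun e f => ?_⟩
    obtain ⟨p, hp⟩ := exists_walk_of_length hconn hcard w hodd e.val.1 f.val.2
    have := walk_reach lazy p e f rfl rfl
    rwa [hp] at this
  · refine ⟨2 * Fintype.card V, by omega, fun e f => ?_⟩
    obtain ⟨s, hs⟩ := exists_neighbor hconn hcard v0
    obtain ⟨p1⟩ := hconn.preconnected e.val.1 s
    obtain ⟨p2⟩ := hconn.preconnected v0 f.val.2
    set q1 := (p1.toPath : G.Walk e.val.1 s) with hq1
    set q2 := (p2.toPath : G.Walk v0 f.val.2) with hq2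
    have h1 : q1.length < Fintype.card V := p1.toPath.prop.length_lt
    have h2 : q2.length < Fintype.card V := p2.toPath.prop.length_lt
    set g : {p : V × V // G.Adj p.1 p.2} := ⟨(v0, s), hs⟩ with hgdef
    have r1 : ReachN (AFStep G lazy) (q1.length + 1) e g := walk_reach lazy q1 e g rfl rfl
    have r2 : ReachN (AFStep G lazy) (2 * Fintype.card V - (q1.length + 1) - (q2.length + 1)) g g :=
      stall lazy g hv0 _
    have r3 : ReachN (AFStep G lazy) (q2.length + 1) g f := walk_reach lazy q2 g f rfl rfl
    have := (r1.trans r2).trans r3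
    have heq : q1.length + 1 + (2 * Fintype.card V - (q1.length + 1) - (q2.length + 1))
        + (q2.length + 1) = 2 * Fintype.card V := by omega
    rwa [heq] at this

end AFaux
namespace AFaux
variable {V : Type*} [Fintype V] [DecidableEq V]
theorem onestep (G : SimpleGraph V) [DecidableRel G.Adj] (r r' : V → ℝ)
    (hr : ∀ i, 0 ≤ r i) (hr' : ∀ i, 0 < r' i) (hsum : ∀ i, r i + r' i ≤ 1)
    (hdeg : ∀ i, 0 < G.degree i)
    (x : V → V → ℕ → ℝ)
    (hrec : ∀ i j, G.Adj i j → ∀ t : ℕ,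
      x i j (t + 1) = (1 - r i - r' i) * x i j t + r i * x j i t +
        (r' i / (G.degree i : ℝ)) * ∑ l ∈ G.neighborFinset i, x l i t)
    (M : ℝ) (t : ℕ)
    (hM : ∀ a b, G.Adj a b → x a b t ≤ M)
    (e f : {p : V × V // G.Adj p.1 p.2})
    (hstep : AFStep G (fun i => r i + r' i < 1) e f)
    (ε : ℝ) (hε0 : 0 < ε)
    (hε1 : ε ≤ r' e.val.1 / (G.degree e.val.1 : ℝ))
    (hε2 : r e.val.1 + r' e.val.1 < 1 → ε ≤ 1 - r e.val.1 - r' e.val.1) :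
    x e.val.1 e.val.2 (t+1) ≤ (1-ε) * M + ε * x f.val.1 f.val.2 t := by
  obtain ⟨⟨i, j⟩, hij⟩ := e
  simp only at hε1 hε2 ⊢
  set d : ℝ := (G.degree i : ℝ) with hd
  have hd0 : 0 < d := by rw [hd]; exact_mod_cast hdeg i
  set w : ℝ := r' i / d with hw
  have hw0 : 0 < w := div_pos (hr' i) hd0
  have hwd : w * d = r' i := div_mul_cancel₀ _ (ne_of_gt hd0)
  have hxijM : x i j t ≤ M := hM i j hij
  have hxjiM : x j i t ≤ M := hM j i hij.symm
  have hrec' := hrec i j hij t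
  have hcard : ((G.neighborFinset i).card : ℝ) = d := by
    rw [SimpleGraph.card_neighborFinset_eq_degree]
  rcases hstep with hf | ⟨hlazy, rfl⟩
  · -- move step: f = (l, i) with l adjacent to i
    obtain ⟨⟨l, i'⟩, hli'⟩ := f
    simp only at hf
    obtain rfl : i = i' := hf.symm
    simp only
    have hli : G.Adj l i := hli'
    have hlmem : l ∈ G.neighborFinset i := by
      rw [SimpleGraph.mem_neighborFinset]; exact hli.symm
    have hsplit : ∑ l' ∈ G.neighborFinset i, x l' i t
        = (∑ l' ∈ (G.neighborFinset i).erase l, x l' i t) + x l i t :=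
      (Finset.sum_erase_add _ _ hlmem).symm
    have hsum_le : ∑ l' ∈ (G.neighborFinset i).erase l, x l' i t
        ≤ (d - 1) * M := by
      have h1 : ∑ l' ∈ (G.neighborFinset i).erase l, x l' i t
          ≤ ((G.neighborFinset i).erase l).card • M := by
        apply Finset.sum_le_card_nsmul
        intro b hb
        have hb' : b ∈ G.neighborFinset i := Finset.mem_of_mem_erase hb
        exact hM b i ((SimpleGraph.mem_neighborFinset _ _ _).mp hb').symm
      have h2 : (((G.neighborFinset i).erase l).card : ℝ) = d - 1 := by
        rw [Finset.card_erase_of_mem hlmem]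
        have : 1 ≤ (G.neighborFinset i).card := Finset.card_pos.mpr ⟨l, hlmem⟩
        push_cast [this]
        rw [hcard]  -- might fail; fallback below
      calc ∑ l' ∈ (G.neighborFinset i).erase l, x l' i t
          ≤ ((G.neighborFinset i).erase l).card • M := h1
        _ = (((G.neighborFinset i).erase l).card : ℝ) * M := nsmul_eq_mul _ _
        _ = (d - 1) * M := by rw [h2]
    have hxliM : x l i t ≤ M := hM l i hli
    have key : x i j (t+1) ≤ (1 - w) * M + w * x l i t := by
      rw [hrec', hsplit]
      have e1 : (1 - r i - r' i) * x i j t ≤ (1 - r i - r' i) * M := by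
        have := hsum i; nlinarith
      have e2 : r i * x j i t ≤ r i * M := by
        have := hr i; nlinarith
      have e3 : (r' i / d) * ((∑ l' ∈ (G.neighborFinset i).erase l, x l' i t) + x l i t)
          ≤ w * ((d - 1) * M + x l i t) := by
        rw [← hw]
        apply mul_le_mul_of_nonneg_left _ (le_of_lt hw0)
        linarith
      have : w * ((d-1) * M + x l i t) = (r' i - w) * M + w * x l i t := by
        rw [← hwd]; ring
      nlinarith
    have : (1 - w) * M + w * x l i t ≤ (1-ε) * M + ε * x l i t := by nlinarith
    linarith
  · -- lazy stall step: f = e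
    simp only at hlazy ⊢
    have hsum_le : ∑ l' ∈ G.neighborFinset i, x l' i t ≤ d * M := by
      have h1 : ∑ l' ∈ G.neighborFinset i, x l' i t ≤ (G.neighborFinset i).card • M := by
        apply Finset.sum_le_card_nsmul
        intro b hb
        exact hM b i ((SimpleGraph.mem_neighborFinset _ _ _).mp hb).symm
      calc ∑ l' ∈ G.neighborFinset i, x l' i t ≤ (G.neighborFinset i).card • M := h1
        _ = ((G.neighborFinset i).card : ℝ) * M := nsmul_eq_mul _ _
        _ = d * M := by rw [hcard]
    have hε' := hε2 hlazy
    have key : x i j (t+1) ≤ (1 - r i - r' i) * x i j t + (r i + r' i) * M := by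
      rw [hrec']
      have e2 : r i * x j i t ≤ r i * M := by have := hr i; nlinarith
      have e3 : (r' i / d) * (∑ l' ∈ G.neighborFinset i, x l' i t) ≤ r' i * M := by
        rw [← hw]
        have : w * (∑ l' ∈ G.neighborFinset i, x l' i t) ≤ w * (d * M) :=
          mul_le_mul_of_nonneg_left hsum_le (le_of_lt hw0)
        calc w * (∑ l' ∈ G.neighborFinset i, x l' i t) ≤ w * (d * M) := this
          _ = r' i * M := by rw [← hwd]; ring
      linarith
    have : (1 - r i - r' i) * x i j t + (r i + r' i) * M
        ≤ (1-ε) * M + ε * x i j t := by nlinarith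
    linarith

end AFaux
namespace AFaux
variable {V : Type*} [Fintype V] [DecidableEq V]
theorem pair_swap (G : SimpleGraph V) [DecidableRel G.Adj] (F : V → V → ℝ) :
    ∑ p ∈ Finset.univ.filter (fun p : V × V => G.Adj p.1 p.2), F p.1 p.2
      = ∑ p ∈ Finset.univ.filter (fun p : V × V => G.Adj p.1 p.2), F p.2 p.1 := by
  apply Finset.sum_nbij' (fun p => Prod.swap p) (fun p => Prod.swap p)
  · intro a ha
    simp only [Finset.mem_filter, Finset.mem_univ, true_and] at ha ⊢
    exact ha.symm
  · intro a ha
    simp only [Finset.mem_filter, Finset.mem_univ, true_and] at ha ⊢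
    exact ha.symm
  · intro a _; simp
  · intro a _; simp
  · intro a _; simp

theorem pair_group (G : SimpleGraph V) [DecidableRel G.Adj] (F : V → V → ℝ) :
    ∑ p ∈ Finset.univ.filter (fun p : V × V => G.Adj p.1 p.2), F p.1 p.2
      = ∑ i : V, ∑ j ∈ G.neighborFinset i, F i j := by
  rw [Finset.sum_filter, Fintype.sum_prod_type]
  apply Finset.sum_congr rfl
  intro i _
  rw [SimpleGraph.neighborFinset_eq_filter, Finset.sum_filter]

theorem conserved (G : SimpleGraph V) [DecidableRel G.Adj] (r r' : V → ℝ)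
    (hpos : ∀ i, 0 < r i + r' i) (hdeg : ∀ i, 0 < G.degree i)
    (x : V → V → ℕ → ℝ)
    (hrec : ∀ i j, G.Adj i j → ∀ t : ℕ,
      x i j (t + 1) = (1 - r i - r' i) * x i j t + r i * x j i t +
        (r' i / (G.degree i : ℝ)) * ∑ l ∈ G.neighborFinset i, x l i t)
    (t : ℕ) :
    ∑ p ∈ Finset.univ.filter (fun p : V × V => G.Adj p.1 p.2),
        (1/(r p.1 + r' p.1)) * x p.1 p.2 (t+1)
      = ∑ p ∈ Finset.univ.filter (fun p : V × V => G.Adj p.1 p.2),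
          (1/(r p.1 + r' p.1)) * x p.1 p.2 t := by
  classical
  set P := Finset.univ.filter (fun p : V × V => G.Adj p.1 p.2) with hP
  set c : V → ℝ := fun i => 1/(r i + r' i) with hc
  have hadjP : ∀ p ∈ P, G.Adj p.1 p.2 := by
    intro p hp
    simp only [hP, Finset.mem_filter] at hp
    exact hp.2
  have step1 : ∑ p ∈ P, c p.1 * x p.1 p.2 (t+1)
      = (∑ p ∈ P, (c p.1 * (1 - r p.1 - r' p.1)) * x p.1 p.2 t)
        + ((∑ p ∈ P, (c p.1 * r p.1) * x p.2 p.1 t)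
        + ∑ p ∈ P, c p.1 * ((r' p.1 / (G.degree p.1 : ℝ)) * ∑ l ∈ G.neighborFinset p.1, x l p.1 t)) := by
    rw [← Finset.sum_add_distrib, ← Finset.sum_add_distrib]
    apply Finset.sum_congr rfl
    intro p hp
    rw [hrec p.1 p.2 (hadjP p hp) t]
    ring
  have step2 : ∑ p ∈ P, (c p.1 * r p.1) * x p.2 p.1 t
      = ∑ p ∈ P, (c p.2 * r p.2) * x p.1 p.2 t :=
    pair_swap G (fun a b => (c a * r a) * x b a t)
  have step3 : ∑ p ∈ P, c p.1 * ((r' p.1 / (G.degree p.1 : ℝ)) * ∑ l ∈ G.neighborFinset p.1, x l p.1 t)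
      = ∑ p ∈ P, (c p.2 * r' p.2) * x p.1 p.2 t := by
    rw [pair_group G (fun i _ => c i * ((r' i / (G.degree i : ℝ)) * ∑ l ∈ G.neighborFinset i, x l i t))]
    have inner : ∀ i : V,
        ∑ j ∈ G.neighborFinset i, (c i * ((r' i / (G.degree i : ℝ)) * ∑ l ∈ G.neighborFinset i, x l i t))
          = ∑ j ∈ G.neighborFinset i, (c i * r' i) * x j i t := by
      intro i
      rw [Finset.sum_const, ← Finset.mul_sum]
      have hdnz : ((G.degree i : ℝ)) ≠ 0 := by
        have := hdeg i; positivity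
      rw [SimpleGraph.card_neighborFinset_eq_degree, nsmul_eq_mul]
      field_simp
    rw [Finset.sum_congr rfl (fun i _ => inner i),
      ← pair_group G (fun i j => (c i * r' i) * x j i t)]
    exact pair_swap G (fun a b => (c a * r' a) * x b a t)
  rw [step1, step2, step3, ← Finset.sum_add_distrib, ← Finset.sum_add_distrib]
  apply Finset.sum_congr rfl
  intro p hp
  have h1 : r p.1 + r' p.1 ≠ 0 := ne_of_gt (hpos p.1)
  have h2 : r p.2 + r' p.2 ≠ 0 := ne_of_gt (hpos p.2)
  have coeff : c p.1 * (1 - r p.1 - r' p.1) + (c p.2 * r p.2 + c p.2 * r' p.2) = c p.1 := by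
    simp only [hc]
    field_simp
    ring
  calc (c p.1 * (1 - r p.1 - r' p.1)) * x p.1 p.2 t
        + ((c p.2 * r p.2) * x p.1 p.2 t + (c p.2 * r' p.2) * x p.1 p.2 t)
      = (c p.1 * (1 - r p.1 - r' p.1) + (c p.2 * r p.2 + c p.2 * r' p.2)) * x p.1 p.2 t := by ring
    _ = c p.1 * x p.1 p.2 t := by rw [coeff]

end AFaux


open AFaux




/-- synchronous all-floating reciprocation on a finite connected
simple graph. If every agent has r_i' > 0 and r_i + r_i' ≤ 1, and the graph has
an odd cycle or some agent has r_i + r_i' < 1, then all action sequences on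
edges converge to the common limit
L = (Σ_i (d(i)/(r_i+r_i'))·k_i) / (Σ_i d(i)/(r_i+r_i')). -/
theorem all_floating_sync_common_limit
    {V : Type*} [Fintype V] [DecidableEq V]
    (G : SimpleGraph V) [DecidableRel G.Adj]
    (hconn : G.Connected) (hcard : 2 ≤ Fintype.card V)
    (k r r' : V → ℝ)
    (hr : ∀ i, 0 ≤ r i) (hr' : ∀ i, 0 < r' i) (hsum : ∀ i, r i + r' i ≤ 1)
    (hodd_or : (∃ (u : V) (w : G.Walk u u), w.IsCycle ∧ Odd w.length) ∨
      ∃ i, r i + r' i < 1)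
    (x : V → V → ℕ → ℝ)
    (hx0 : ∀ i j, G.Adj i j → x i j 0 = k i)
    (hrec : ∀ i j, G.Adj i j → ∀ t : ℕ,
      x i j (t + 1) = (1 - r i - r' i) * x i j t + r i * x j i t +
        (r' i / (G.degree i : ℝ)) * ∑ l ∈ G.neighborFinset i, x l i t) :
    ∀ i j, G.Adj i j →
      Filter.Tendsto (x i j) Filter.atTop
        (nhds ((∑ i : V, ((G.degree i : ℝ) / (r i + r' i)) * k i) /
          (∑ i : V, (G.degree i : ℝ) / (r i + r' i)))) := by
  classical
  have hNV : Nonempty V := Fintype.card_pos_iff.mp (by omega)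
  have hdeg : ∀ i, 0 < G.degree i := fun i =>
    (G.degree_pos_iff_exists_adj i).mpr (exists_neighbor hconn hcard i)
  have hpos : ∀ i, 0 < r i + r' i := fun i => add_pos_of_nonneg_of_pos (hr i) (hr' i)
  have hEne : Nonempty {p : V × V // G.Adj p.1 p.2} := by
    obtain ⟨v⟩ := hNV
    obtain ⟨w, hw⟩ := exists_neighbor hconn hcard v
    exact ⟨⟨(v, w), hw⟩⟩
  have hVne : (Finset.univ : Finset V).Nonempty := Finset.univ_nonempty
  -- epsilon
  set εf : V → ℝ := fun i => if r i + r' i < 1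
      then min (r' i / (G.degree i : ℝ)) (1 - r i - r' i)
      else r' i / (G.degree i : ℝ) with hεf
  set ε : ℝ := Finset.univ.inf' hVne εf with hεdef
  have hdiv_pos : ∀ i, 0 < r' i / (G.degree i : ℝ) := fun i =>
    div_pos (hr' i) (by exact_mod_cast hdeg i)
  have hdiv_le1 : ∀ i, r' i / (G.degree i : ℝ) ≤ 1 := by
    intro i
    rw [div_le_one (by exact_mod_cast hdeg i)]
    have h1 : r' i ≤ 1 := by have := hsum i; have := hr i; linarith
    have h2 : (1 : ℝ) ≤ (G.degree i : ℝ) := by exact_mod_cast hdeg i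
    linarith
  have hε0 : 0 < ε := by
    rw [hεdef, Finset.lt_inf'_iff]
    intro i _
    simp only [hεf]
    split
    · next h => exact lt_min (hdiv_pos i) (by linarith)
    · exact hdiv_pos i
  have hε1i : ∀ i, ε ≤ r' i / (G.degree i : ℝ) := by
    intro i
    refine le_trans (Finset.inf'_le εf (Finset.mem_univ i)) ?_
    simp only [hεf]
    split
    · exact min_le_left _ _
    · exact le_rfl
  have hε2i : ∀ i, r i + r' i < 1 → ε ≤ 1 - r i - r' i := by
    intro i hi
    refine le_trans (Finset.inf'_le εf (Finset.mem_univ i)) ?_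
    simp only [hεf, if_pos hi]
    exact min_le_right _ _
  have hεle1 : ε ≤ 1 := le_trans (hε1i (Classical.arbitrary V)) (hdiv_le1 _)
  -- reachability
  set lazy : V → Prop := fun i => r i + r' i < 1 with hlazy
  obtain ⟨N, hN1, hreach⟩ := reach_exists hconn hcard lazy
    (by rcases hodd_or with ⟨u, w, _, ho⟩ | h
        · exact Or.inl ⟨u, w, ho⟩
        · exact Or.inr h)
  -- the edge-indexed system
  set y : ℕ → {p : V × V // G.Adj p.1 p.2} → ℝ := fun t e => x e.val.1 e.val.2 t with hy
  set x2 : V → V → ℕ → ℝ := fun i j t => -(x i j t) with hx2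
  have hrec2 : ∀ i j, G.Adj i j → ∀ t : ℕ,
      x2 i j (t + 1) = (1 - r i - r' i) * x2 i j t + r i * x2 j i t +
        (r' i / (G.degree i : ℝ)) * ∑ l ∈ G.neighborFinset i, x2 l i t := by
    intro i j hij t
    simp only [hx2]
    rw [hrec i j hij t, Finset.sum_neg_distrib]
    ring
  have hup : ∀ t a b, AFStep G lazy a b → y (t+1) a ≤ (1-ε) * Msup y t + ε * y t b := by
    intro t a b hab
    exact onestep G r r' hr hr' hsum hdeg x hrec (Msup y t) t
      (fun u v huv => le_Msup y t ⟨(u, v), huv⟩) a b hab ε hε0 (hε1i _) (hε2i _)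
  have hlo : ∀ t a b, AFStep G lazy a b → (1-ε) * minf y t + ε * y t b ≤ y (t+1) a := by
    intro t a b hab
    have h2 := onestep G r r' hr hr' hsum hdeg x2 hrec2 (-(minf y t)) t
      (fun u v huv => by
        have := minf_le y t ⟨(u, v), huv⟩
        simp only [hx2]
        simp only [hy] at this
        linarith) a b hab ε hε0 (hε1i _) (hε2i _)
    simp only [hx2] at h2
    simp only [hy]
    linarith
  obtain ⟨L, hL⟩ := tendsto_of_reach y ε N (AFStep G lazy) hε0 hεle1 hN1
    (afstep_ex lazy) hreach hup hlo
  -- identify the limit via the conserved quantity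
  set P := Finset.univ.filter (fun p : V × V => G.Adj p.1 p.2) with hPdef
  have hadjP : ∀ p ∈ P, G.Adj p.1 p.2 := by
    intro p hp
    simp only [hPdef, Finset.mem_filter] at hp
    exact hp.2
  have hTconst : ∀ t, ∑ p ∈ P, (1/(r p.1 + r' p.1)) * x p.1 p.2 t
      = ∑ p ∈ P, (1/(r p.1 + r' p.1)) * k p.1 := by
    intro t
    induction t with
    | zero =>
      apply Finset.sum_congr rfl
      intro p hp
      rw [hx0 p.1 p.2 (hadjP p hp)]
    | succ n ih =>
      rw [conserved G r r' hpos hdeg x hrec n]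
      exact ih
  have hTlim : Filter.Tendsto (fun t => ∑ p ∈ P, (1/(r p.1 + r' p.1)) * x p.1 p.2 t)
      Filter.atTop (nhds (∑ p ∈ P, (1/(r p.1 + r' p.1)) * L)) := by
    apply tendsto_finset_sum
    intro p hp
    exact (hL ⟨(p.1, p.2), hadjP p hp⟩).const_mul _
  have hTlim2 : Filter.Tendsto (fun t => ∑ p ∈ P, (1/(r p.1 + r' p.1)) * x p.1 p.2 t)
      Filter.atTop (nhds (∑ p ∈ P, (1/(r p.1 + r' p.1)) * k p.1)) := by
    simp only [hTconst]
    exact tendsto_const_nhds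
  have hLeq : (∑ p ∈ P, (1/(r p.1 + r' p.1)) * L)
      = ∑ p ∈ P, (1/(r p.1 + r' p.1)) * k p.1 := tendsto_nhds_unique hTlim hTlim2
  -- compute the sums over V
  have hgroup : ∀ F : V → ℝ, ∑ p ∈ P, (1/(r p.1 + r' p.1)) * F p.1
      = ∑ i : V, ((G.degree i : ℝ)/(r i + r' i)) * F i := by
    intro F
    rw [hPdef, pair_group G (fun i _ => (1/(r i + r' i)) * F i)]
    apply Finset.sum_congr rfl
    intro i _
    rw [Finset.sum_const, SimpleGraph.card_neighborFinset_eq_degree, nsmul_eq_mul]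
    ring
  have hnum : ∑ p ∈ P, (1/(r p.1 + r' p.1)) * k p.1
      = ∑ i : V, ((G.degree i : ℝ)/(r i + r' i)) * k i := hgroup k
  have hden : ∑ p ∈ P, (1/(r p.1 + r' p.1)) * L
      = (∑ i : V, (G.degree i : ℝ)/(r i + r' i)) * L := by
    rw [hgroup (fun _ => L), Finset.sum_mul]
  have hden_pos : 0 < ∑ i : V, (G.degree i : ℝ)/(r i + r' i) := by
    apply Finset.sum_pos _ hVne
    intro i _
    exact div_pos (by exact_mod_cast hdeg i) (hpos i)
  have hLval : L = (∑ i : V, ((G.degree i : ℝ)/(r i + r' i)) * k i)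
      / (∑ i : V, (G.degree i : ℝ)/(r i + r' i)) := by
    rw [eq_div_iff (ne_of_gt hden_pos)]
    rw [hden, hnum] at hLeq
    linarith [hLeq]
  intro i j hij
  have := hL ⟨(i, j), hij⟩
  rw [hLval] at this
  exact this
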